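/- Assume the families {q_s : X → X_s | s ∈ Γ} and {D_s : s ∈ Γ} form a q-skeleton on X. If K ⊆ ⋃_{s∈Γ} q_s*(C_p(X_s)) ⊆ C_p(X) is countably compact, then K has a full r-skeleton. -/

import Mathlib

open Filter Topology Set

universe u v

/-- `[X]^{≤ω}`: the countable subsets of `X`, ordered by inclusion. -/
abbrev CtbSet (X : Type*) := {A : Set X // A.Countable}

/-- A map between families of countable sets is `ω`-monotone if it is monotone with respect to
inclusion and preserves unions of increasing `ω`-chains. -/
def OmegaMonotone {X Y : Type*} (φ : CtbSet X → CtbSet Y) : Prop :=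
  (∀ A B : CtbSet X, A.1 ⊆ B.1 → (φ A).1 ⊆ (φ B).1) ∧
  ∀ (A : ℕ → CtbSet X) (B : CtbSet X), (∀ n, (A n).1 ⊆ (A (n + 1)).1) →
    B.1 = ⋃ n, (A n).1 → (φ B).1 = ⋃ n, (φ (A n)).1

/-- An assignment of sets indexed by a poset `Γ` is `ω`-monotone if it is order preserving and
sends suprema of increasing `ω`-chains to the union of the images. -/
def OmegaMonotoneIdx {Γ Y : Type*} [Preorder Γ] (D : Γ → Set Y) : Prop :=
  (∀ s t : Γ, s ≤ t → D s ⊆ D t) ∧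
  ∀ (s : ℕ → Γ) (t : Γ), Monotone s → IsLUB (Set.range s) t → D t = ⋃ n, D (s n)

/-- `N` is a network of the map `f`. -/
def IsNetworkOfMap {X Y : Type*} [TopologicalSpace Y] (N : Set (Set X)) (f : X → Y) : Prop :=
  ∀ x : X, ∀ U : Set Y, IsOpen U → f x ∈ U → ∃ M ∈ N, x ∈ M ∧ f '' M ⊆ U

/-- `q : X → Y` is an `ℝ`-quotient map. -/
def RQuotient {X Y : Type*} [TopologicalSpace X] [TopologicalSpace Y] (q : X → Y) : Prop :=
  Continuous q ∧ Function.Surjective q ∧ ∀ g : Y → ℝ, Continuous (g ∘ q) → Continuous g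

/-- The family `r` of retractions indexed by `Γ` is an `r`-skeleton on `X`. -/
structure IsRSkeleton {X : Type*} [TopologicalSpace X] {Γ : Type*} [PartialOrder Γ]
    (r : Γ → X → X) : Prop where
  directed : ∀ s t : Γ, ∃ u, s ≤ u ∧ t ≤ u
  sigma : ∀ s : ℕ → Γ, Monotone s → ∃ t, IsLUB (Set.range s) t
  cont : ∀ s, Continuous (r s)
  retract : ∀ s x, r s (r s x) = r s x
  cosmic : ∀ s, ∃ N : Set (Set X), N.Countable ∧ (∀ M ∈ N, M ⊆ Set.range (r s)) ∧
    ∀ x ∈ Set.range (r s), ∀ U : Set X, IsOpen U → x ∈ U → ∃ M ∈ N, x ∈ M ∧ M ⊆ U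
  comm₁ : ∀ s t : Γ, s ≤ t → ∀ x, r s (r t x) = r s x
  comm₂ : ∀ s t : Γ, s ≤ t → ∀ x, r t (r s x) = r s x
  chain : ∀ (s : ℕ → Γ) (t : Γ), Monotone s → IsLUB (Set.range s) t →
    ∀ x, Tendsto (fun n => r (s n) x) atTop (𝓝 (r t x))
  toId : ∀ x : X, Tendsto (fun s : Γ => r s x) atTop (𝓝 x)

def IsFullRSkeleton {X : Type*} [TopologicalSpace X] {Γ : Type*} [PartialOrder Γ]
    (r : Γ → X → X) : Prop :=
  IsRSkeleton r ∧ ∀ x : X, ∃ s : Γ, x ∈ Set.range (r s)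

def HasFullRSkeleton (X : Type u) [TopologicalSpace X] : Prop :=
  ∃ (Γ : Type u) (inst : PartialOrder Γ) (r : Γ → X → X), @IsFullRSkeleton X _ Γ inst r

/-- A strong `r`-skeleton: an `r`-skeleton such that for every index `s`, every `n` and every
closed subset `F` of `X^n` there is `t ≥ s` whose `n`-th power maps `F` into itself. -/
def IsStrongRSkeleton {X : Type*} [TopologicalSpace X] {Γ : Type*} [PartialOrder Γ]
    (r : Γ → X → X) : Prop :=
  IsRSkeleton r ∧ ∀ (s : Γ) (n : ℕ) (F : Set (Fin n → X)), IsClosed F →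
    ∃ t : Γ, s ≤ t ∧ (fun (v : Fin n → X) (i : Fin n) => r t (v i)) '' F ⊆ F

def HasStrongRSkeleton (X : Type u) [TopologicalSpace X] : Prop :=
  ∃ (Γ : Type u) (inst : PartialOrder Γ) (r : Γ → X → X), @IsStrongRSkeleton X _ Γ inst r

/-- A `q`-skeleton on `X` indexed by the up-directed σ-complete poset `Γ`. -/
structure QSkeleton (X : Type u) [TopologicalSpace X] (Γ : Type v) [PartialOrder Γ] where
  Xs : Γ → Type u
  top : ∀ s, TopologicalSpace (Xs s)
  q : ∀ s, X → Xs s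
  D : Γ → Set X
  directed : ∀ s t : Γ, ∃ u, s ≤ u ∧ t ≤ u
  sigma : ∀ s : ℕ → Γ, Monotone s → ∃ t, IsLUB (Set.range s) t
  rquot : ∀ s, @RQuotient X (Xs s) _ (top s) (q s)
  D_ctble : ∀ s, (D s).Countable
  dense : ∀ s, @Dense (Xs s) (top s) (q s '' D s)
  proj : ∀ s t : Γ, s ≤ t → ∃ p : Xs t → Xs s, @Continuous _ _ (top t) (top s) p ∧
    Function.Surjective p ∧ ∀ x, q s x = p (q t x)
  Dmono : OmegaMonotoneIdx D

/-- The `q`-skeleton is full: `C_p(X) = ⋃_s q_s^*(C_p(X_s))`. -/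
def QSkeleton.Full {X : Type u} [TopologicalSpace X] {Γ : Type v} [PartialOrder Γ]
    (S : QSkeleton X Γ) : Prop :=
  ∀ f : X → ℝ, Continuous f →
    ∃ (s : Γ) (g : S.Xs s → ℝ), @Continuous _ _ (S.top s) _ g ∧ f = g ∘ S.q s

def HasFullQSkeleton (X : Type u) [TopologicalSpace X] : Prop :=
  ∃ (Γ : Type u) (inst : PartialOrder Γ) (S : @QSkeleton X _ Γ inst), S.Full

/-- `C_p(X)`: continuous real-valued functions with the topology of pointwise convergence. -/
abbrev Cp (X : Type u) [TopologicalSpace X] : Type u := {f : X → ℝ // Continuous f}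

/-- The diagonal map `Δ_A : X → ℝ^A` of a set `A ⊆ C_p(X)`. -/
def cpDiag {X : Type u} [TopologicalSpace X] (A : Set (Cp X)) (x : X) : ↥A → ℝ :=
  fun f => f.1.1 x

/-- The topology of the Alexandroff duplicate on `X × Bool`. -/
def ADTopology (X : Type*) [TopologicalSpace X] : TopologicalSpace (X × Bool) where
  IsOpen V := ∀ p ∈ V, p.2 = false →
    ∃ U : Set X, IsOpen U ∧ p.1 ∈ U ∧ {q : X × Bool | q.1 ∈ U ∧ q ≠ (p.1, true)} ⊆ V
  isOpen_univ := fun p _ _ => ⟨Set.univ, isOpen_univ, trivial, fun _ _ => trivial⟩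
  isOpen_inter := fun A B hA hB p hp hb => by
    obtain ⟨U, hU, hxU, hUA⟩ := hA p hp.1 hb
    obtain ⟨W, hW, hxW, hWB⟩ := hB p hp.2 hb
    exact ⟨U ∩ W, hU.inter hW, ⟨hxU, hxW⟩,
      fun q hq => ⟨hUA ⟨hq.1.1, hq.2⟩, hWB ⟨hq.1.2, hq.2⟩⟩⟩
  isOpen_sUnion := fun S hS p hp hb => by
    obtain ⟨V, hV, hpV⟩ := hp
    obtain ⟨U, hU, hxU, hUV⟩ := hS V hV p hpV hb
    exact ⟨U, hU, hxU, fun q hq => ⟨V, hV, hUV hq⟩⟩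

/-- The Alexandroff duplicate of `X`. -/
def AD (X : Type u) [TopologicalSpace X] : Type u := X × Bool

instance (X : Type u) [TopologicalSpace X] : TopologicalSpace (AD X) := ADTopology X

/-- A compact Hausdorff space is Corson compact if it embeds into a Σ-product of real lines. -/
def IsCorsonCompact (X : Type u) [TopologicalSpace X] : Prop :=
  CompactSpace X ∧ T2Space X ∧ ∃ (κ : Type u) (e : X → κ → ℝ),
    IsEmbedding e ∧ ∀ x, {i | e x i ≠ 0}.Countable

/-- The assignments `r`, `N` witness that `X` is monotonically retractable. -/
structure MonRetractableWitness (X : Type u) [TopologicalSpace X]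
    (r : CtbSet X → X → X) (N : CtbSet X → CtbSet (Set X)) : Prop where
  cont : ∀ A, Continuous (r A)
  retract : ∀ A x, r A (r A x) = r A x
  sub : ∀ A : CtbSet X, A.1 ⊆ Set.range (r A)
  network : ∀ A, IsNetworkOfMap (N A).1 (r A)
  mono : OmegaMonotone N

def MonotonicallyRetractable (X : Type u) [TopologicalSpace X] : Prop :=
  ∃ (r : CtbSet X → X → X) (N : CtbSet X → CtbSet (Set X)), MonRetractableWitness X r N

/-- `X` is monotonically `ω`-stable. -/
def MonotonicallyOmegaStable (X : Type u) [TopologicalSpace X] : Prop :=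
  ∃ N : CtbSet (Cp X) → CtbSet (Set X), OmegaMonotone N ∧
    ∀ A : CtbSet (Cp X), IsNetworkOfMap (N A).1 (cpDiag (closure A.1))

/-- A subset `K` is countably compact: every countable open cover of `K` has a finite subcover. -/
def IsCountablyCompactSet {X : Type*} [TopologicalSpace X] (K : Set X) : Prop :=
  ∀ U : ℕ → Set X, (∀ n, IsOpen (U n)) → K ⊆ ⋃ n, U n → ∃ t : Finset ℕ, K ⊆ ⋃ n ∈ t, U n

/-- The closure of `A` under `φ`. -/
def phiBar {X : Type*} (φ : CtbSet X → CtbSet X) (A : CtbSet X) : Set X :=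
  ⋂₀ {B : Set X | ∃ hB : B.Countable, A.1 ⊆ B ∧ (φ ⟨B, hB⟩).1 ⊆ B}

/-- The iterates `φ_n` of `φ`: `φ_0(A) = A`, `φ_{n+1}(A) = φ_n(A) ∪ φ(φ_n(A))`. -/
def phiIter {X : Type*} (φ : CtbSet X → CtbSet X) : ℕ → CtbSet X → CtbSet X
  | 0, A => A
  | n + 1, A => ⟨(phiIter φ n A).1 ∪ (φ (phiIter φ n A)).1,
      (phiIter φ n A).2.union (φ (phiIter φ n A)).2⟩

namespace QSkelAux

variable {X : Type u} [TopologicalSpace X] {Γ : Type u} [PartialOrder Γ]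
variable (S : QSkeleton X Γ)

lemma cont_eval (x : X) : Continuous fun f : Cp X => f.1 x :=
  (continuous_apply x).comp continuous_subtype_val

/-- `f` is constant on fibers of `q s`. -/
def Fact (s : Γ) (f : Cp X) : Prop := ∀ x y : X, S.q s x = S.q s y → f.1 x = f.1 y

lemma fact_mono {s t : Γ} (hst : s ≤ t) {f : Cp X} (hf : Fact S s f) : Fact S t f := by
  obtain ⟨p, -, -, hp⟩ := S.proj s t hst
  intro x y hxy
  exact hf x y (by rw [hp, hp, hxy])

lemma fact_of_factor {f : Cp X} {s : Γ} {g : S.Xs s → ℝ} (hfg : f.1 = g ∘ S.q s) :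
    Fact S s f := fun x y hxy => by
  have hx : f.1 x = g (S.q s x) := congrFun hfg x
  have hy : f.1 y = g (S.q s y) := congrFun hfg y
  rw [hx, hy, hxy]

lemma isClosed_fact (s : Γ) : IsClosed {f : Cp X | Fact S s f} := by
  have h : {f : Cp X | Fact S s f} =
      ⋂ (x : X) (y : X) (_ : S.q s x = S.q s y), {f : Cp X | f.1 x = f.1 y} := by
    ext f
    simp only [mem_setOf_eq, mem_iInter]
    rfl
  rw [h]
  exact isClosed_iInter fun x => isClosed_iInter fun y => isClosed_iInter fun _ =>
    isClosed_eq (cont_eval x) (cont_eval y)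

lemma fact_unique {s : Γ} {f h : Cp X} (hf : Fact S s f) (hh : Fact S s h)
    (he : ∀ d ∈ S.D s, f.1 d = h.1 d) : f = h := by
  letI := S.top s
  obtain ⟨hqc, hqs, hqq⟩ := S.rquot s
  set g : S.Xs s → ℝ := fun z => f.1 (Function.surjInv hqs z) with hgdef
  set g' : S.Xs s → ℝ := fun z => h.1 (Function.surjInv hqs z) with hg'def
  have hgf : ∀ x, g (S.q s x) = f.1 x := fun x => hf _ _ (Function.surjInv_eq hqs _)
  have hg'h : ∀ x, g' (S.q s x) = h.1 x := fun x => hh _ _ (Function.surjInv_eq hqs _)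
  have hgc : Continuous g := hqq g (by
    have : (g ∘ S.q s) = f.1 := funext hgf
    rw [this]; exact f.2)
  have hg'c : Continuous g' := hqq g' (by
    have : (g' ∘ S.q s) = h.1 := funext hg'h
    rw [this]; exact h.2)
  have heq : g = g' := by
    refine Continuous.ext_on (S.dense s) hgc hg'c ?_
    rintro z ⟨d, hd, rfl⟩
    rw [hgf d, hg'h d]; exact he d hd
  refine Subtype.ext (funext fun x => ?_)
  rw [← hgf x, ← hg'h x, heq]

/-- Cluster point of a sequence in `Cp X`. -/
def Cl (u : ℕ → Cp X) (f : Cp X) : Prop :=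
  ∀ U : Set (Cp X), IsOpen U → f ∈ U → ∀ m, ∃ n, m ≤ n ∧ u n ∈ U

lemma exists_cluster {K : Set (Cp X)} (hcc : IsCountablyCompactSet K)
    (u : ℕ → Cp X) (hu : ∀ n, u n ∈ K) : ∃ f ∈ K, Cl u f := by
  by_contra hcon
  push_neg at hcon
  simp only [Cl] at hcon
  push_neg at hcon
  set V : ℕ → Set (Cp X) := fun m => (closure (u '' Ici m))ᶜ with hV
  have hVopen : ∀ m, IsOpen (V m) := fun m => isClosed_closure.isOpen_compl
  have hVmono : Monotone V := fun a b hab =>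
    compl_subset_compl.2 (closure_mono (image_mono (Ici_subset_Ici.2 hab)))
  have hcover : K ⊆ ⋃ m, V m := by
    intro f hf
    obtain ⟨U, hUo, hfU, m, hm⟩ := hcon f hf
    refine mem_iUnion.2 ⟨m, fun hcl => ?_⟩
    obtain ⟨g, hg1, hg2⟩ := mem_closure_iff.1 hcl U hUo hfU
    obtain ⟨n, hn, rfl⟩ := hg2
    exact hm n hn hg1
  obtain ⟨t, ht⟩ := hcc V hVopen hcover
  have hN : u (t.sup id) ∈ ⋃ m ∈ t, V m := ht (hu _)
  obtain ⟨m, hmt, hmV⟩ := mem_iUnion₂.1 hN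
  have : u (t.sup id) ∈ V (t.sup id) := hVmono (Finset.le_sup (f := id) hmt) hmV
  exact this (subset_closure ⟨t.sup id, mem_Ici.2 le_rfl, rfl⟩)

lemma Cl.mem_closed {u : ℕ → Cp X} {f : Cp X} (hc : Cl u f) {C : Set (Cp X)}
    (hC : IsClosed C) (m : ℕ) (hm : ∀ n, m ≤ n → u n ∈ C) : f ∈ C := by
  by_contra hf
  obtain ⟨n, hnm, hn⟩ := hc Cᶜ hC.isOpen_compl hf m
  exact hn (hm n hnm)

lemma Cl.eval_eq_of_approx {u : ℕ → Cp X} {f : Cp X} (hc : Cl u f) (d : X) (a : ℝ)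
    (h : ∀ ε > (0:ℝ), ∃ m, ∀ n, m ≤ n → |(u n).1 d - a| < ε) : f.1 d = a := by
  by_contra hne
  have hε : 0 < |f.1 d - a| := abs_pos.2 (sub_ne_zero.2 hne)
  obtain ⟨m, hm⟩ := h (|f.1 d - a| / 2) (by positivity)
  have hUo : IsOpen {g : Cp X | |g.1 d - f.1 d| < |f.1 d - a| / 2} :=
    isOpen_lt (Continuous.abs ((cont_eval d).sub continuous_const)) continuous_const
  obtain ⟨n, hnm, hn⟩ := hc _ hUo (by simp [hε]) m
  have h1 := hm n hnm
  have h2 : |f.1 d - a| ≤ |f.1 d - (u n).1 d| + |(u n).1 d - a| := abs_sub_le _ _ _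
  rw [abs_sub_comm (f.1 d) ((u n).1 d)] at h2
  simp only [mem_setOf_eq] at hn
  linarith

/-- Restriction to `D s`. -/
def pim (s : Γ) (f : Cp X) : ↥(S.D s) → ℝ := fun d => f.1 d.1

lemma cont_pim (s : Γ) : Continuous (pim S s) := continuous_pi fun d => cont_eval d.1

end QSkelAux

namespace QSkelAux

variable {X : Type u} [TopologicalSpace X] {Γ : Type u} [PartialOrder Γ]
variable (S : QSkeleton X Γ)

/-- The key "network" lemma. -/
lemma net {K : Set (Cp X)} (hcc : IsCountablyCompactSet K) (s : Γ)
    {B : Set (Set (↥(S.D s) → ℝ))} (hBb : TopologicalSpace.IsTopologicalBasis B)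
    (f : Cp X) (hfK : f ∈ K) (hfF : Fact S s f) (U : Set (Cp X)) (hU : IsOpen U)
    (hfU : f ∈ U) :
    ∃ b ∈ B, pim S s f ∈ b ∧ {h : Cp X | (h ∈ K ∧ Fact S s h) ∧ pim S s h ∈ b} ⊆ U := by
  by_contra hcon
  push_neg at hcon
  haveI : Countable ↥(S.D s) := (S.D_ctble s).to_subtype
  obtain ⟨bb, hbb⟩ := (𝓝 (pim S s f)).exists_antitone_basis
  have step : ∀ n : ℕ, ∃ h : Cp X, ((h ∈ K ∧ Fact S s h) ∧ pim S s h ∈ bb n) ∧ h ∉ U := by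
    intro n
    have hmem : bb n ∈ 𝓝 (pim S s f) := hbb.mem n
    obtain ⟨b, hbB, hfb, hsub⟩ := hBb.mem_nhds_iff.1 hmem
    obtain ⟨h, hh, hhU⟩ := Set.not_subset.1 (hcon b hbB hfb)
    exact ⟨h, ⟨⟨hh.1, hsub hh.2⟩, hhU⟩⟩
  choose h hh hhU using step
  have htd : Tendsto (fun n => pim S s (h n)) atTop (𝓝 (pim S s f)) :=
    hbb.tendsto fun n => (hh n).2
  obtain ⟨g, hgK, hgc⟩ := exists_cluster hcc h fun n => (hh n).1.1
  have hgF : Fact S s g :=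
    hgc.mem_closed (isClosed_fact S s) 0 fun n _ => (hh n).1.2
  have hgf : ∀ d ∈ S.D s, g.1 d = f.1 d := by
    intro d hd
    refine hgc.eval_eq_of_approx d (f.1 d) ?_
    intro ε hε
    have hco : Tendsto (fun n => (h n).1 d) atTop (𝓝 (f.1 d)) :=
      (tendsto_pi_nhds.1 htd) ⟨d, hd⟩
    obtain ⟨m, hm⟩ := Metric.tendsto_atTop.1 hco ε hε
    exact ⟨m, fun n hn => by simpa [Real.dist_eq] using hm n hn⟩
  have hgeq : g = f := fact_unique S hgF hfF hgf
  obtain ⟨n, -, hnU⟩ := hgc U hU (hgeq ▸ hfU) 0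
  exact hhU n hnU

/-- Goodness of an index: every element of `K` has a "projection" into `K` factoring
through `q s` and agreeing with it on `D s`. -/
def Good (K : Set (Cp X)) (s : Γ) : Prop :=
  ∀ f ∈ K, ∃ h, h ∈ K ∧ Fact S s h ∧ ∀ d ∈ S.D s, h.1 d = f.1 d

noncomputable def rr (K : Set (Cp X)) {s : Γ} (hs : Good S K s) (x : ↥K) : ↥K :=
  ⟨(hs x.1 x.2).choose, (hs x.1 x.2).choose_spec.1⟩

lemma rr_fact (K : Set (Cp X)) {s : Γ} (hs : Good S K s) (x : ↥K) :
    Fact S s (rr S K hs x).1 := (hs x.1 x.2).choose_spec.2.1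

lemma rr_eq_on (K : Set (Cp X)) {s : Γ} (hs : Good S K s) (x : ↥K) :
    ∀ d ∈ S.D s, (rr S K hs x).1.1 d = x.1.1 d := (hs x.1 x.2).choose_spec.2.2

lemma rr_unique (K : Set (Cp X)) {s : Γ} (hs : Good S K s) (x : ↥K) {h : Cp X}
    (hhK : h ∈ K) (hhF : Fact S s h) (ha : ∀ d ∈ S.D s, h.1 d = x.1.1 d) :
    rr S K hs x = ⟨h, hhK⟩ :=
  Subtype.ext (fact_unique S (rr_fact S K hs x) hhF
    fun d hd => (rr_eq_on S K hs x d hd).trans (ha d hd).symm)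

lemma rr_fixed (K : Set (Cp X)) {s : Γ} (hs : Good S K s) (x : ↥K)
    (hx : Fact S s x.1) : rr S K hs x = x := by
  rw [rr_unique S K hs x x.2 hx fun d _ => rfl]

lemma rr_range (K : Set (Cp X)) {s : Γ} (hs : Good S K s) (y : ↥K) :
    y ∈ Set.range (rr S K hs) ↔ Fact S s y.1 := by
  constructor
  · rintro ⟨x, rfl⟩; exact rr_fact S K hs x
  · intro hy; exact ⟨y, rr_fixed S K hs y hy⟩

-- Every countable family in `Γ` has an upper bound.
include S in
lemma countable_ub (g : ℕ → Γ) : ∃ b, ∀ n, g n ≤ b := by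
  have hrec : ∀ c : Γ, ∀ k : ℕ, ∃ u, c ≤ u ∧ g k ≤ u := fun c k => S.directed c (g k)
  choose nx hnx1 hnx2 using hrec
  set c : ℕ → Γ := fun n => Nat.rec (g 0) (fun n cn => nx cn (n+1)) n with hc
  have hstep : ∀ n, c (n+1) = nx (c n) (n+1) := fun n => rfl
  have hmono : Monotone c := monotone_nat_of_le_succ fun n => by
    rw [hstep]; exact hnx1 _ _
  obtain ⟨t, ht⟩ := S.sigma c hmono
  have hub : ∀ n, c n ≤ t := fun n => ht.1 ⟨n, rfl⟩
  refine ⟨t, fun n => ?_⟩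
  cases n with
  | zero => exact hub 0
  | succ n => exact le_trans (hnx2 (c n) (n+1)) (by rw [← hstep]; exact hub (n+1))

/-- Countable "dense in traces" subsets of `K`. -/
lemma separable (K : Set (Cp X)) (a : Γ) :
    ∃ F : Set (Cp X), F.Countable ∧ F ⊆ K ∧
      ∀ f ∈ K, ∀ ε > (0:ℝ), ∀ m : ℕ, ∀ w : ℕ → X,
        ∃ h ∈ F, ∀ k ≤ m, ∀ hk : w k ∈ S.D a, |h.1 (w k) - f.1 (w k)| < ε := by
  classical
  haveI : Countable ↥(S.D a) := (S.D_ctble a).to_subtype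
  set A : Set (↥(S.D a) → ℝ) := pim S a '' K with hA
  obtain ⟨c, hcc', hcd⟩ := TopologicalSpace.exists_countable_dense ↥A
  have hpre : ∀ y : ↥A, ∃ f, f ∈ K ∧ pim S a f = y.1 := fun y => by
    obtain ⟨f, hf, hf2⟩ := y.2
    exact ⟨f, hf, hf2⟩
  choose pf hpfK hpf using hpre
  refine ⟨pf '' c, hcc'.image _, by rintro h ⟨y, -, rfl⟩; exact hpfK y, ?_⟩
  intro f hf ε hε m w
  set O : Set (↥(S.D a) → ℝ) :=
    {v | ∀ k ≤ m, ∀ hk : w k ∈ S.D a, |v ⟨w k, hk⟩ - f.1 (w k)| < ε} with hO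
  have hOopen : IsOpen O := by
    have heq : O = ⋂ k ∈ Finset.range (m+1),
        {v : ↥(S.D a) → ℝ | ∀ hk : w k ∈ S.D a, |v ⟨w k, hk⟩ - f.1 (w k)| < ε} := by
      ext v
      simp only [hO, mem_setOf_eq, mem_iInter, Finset.mem_range, Nat.lt_succ_iff]
    rw [heq]
    refine isOpen_biInter_finset fun k _ => ?_
    by_cases hk : w k ∈ S.D a
    · have h2 : {v : ↥(S.D a) → ℝ | ∀ hk' : w k ∈ S.D a, |v ⟨w k, hk'⟩ - f.1 (w k)| < ε}
          = {v | |v ⟨w k, hk⟩ - f.1 (w k)| < ε} := by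
        ext v; exact ⟨fun H => H hk, fun H _ => H⟩
      rw [h2]
      exact isOpen_lt (Continuous.abs ((continuous_apply _).sub continuous_const))
        continuous_const
    · have h2 : {v : ↥(S.D a) → ℝ | ∀ hk' : w k ∈ S.D a, |v ⟨w k, hk'⟩ - f.1 (w k)| < ε}
          = univ := by
        ext v; simp only [mem_setOf_eq, mem_univ, iff_true]; exact fun hk' => absurd hk' hk
      rw [h2]; exact isOpen_univ
  have hne : (Subtype.val ⁻¹' O : Set ↥A).Nonempty :=
    ⟨⟨pim S a f, mem_image_of_mem _ hf⟩, fun k _ hk => by simp [pim, hε]⟩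
  obtain ⟨y, hyc, hyO⟩ := hcd.exists_mem_open (hOopen.preimage continuous_subtype_val) hne
  refine ⟨pf y, mem_image_of_mem _ hyc, fun k hk hkD => ?_⟩
  have h3 := hyO k hk hkD
  have h4 : (y.1 : ↥(S.D a) → ℝ) ⟨w k, hkD⟩ = (pf y).1 (w k) := by
    rw [← hpf y]; rfl
  rwa [h4] at h3

end QSkelAux

namespace QSkelAux

variable {X : Type u} [TopologicalSpace X] {Γ : Type u} [PartialOrder Γ]
variable (S : QSkeleton X Γ)

lemma step_lemma (K : Set (Cp X)) (hK' : ∀ f ∈ K, ∃ s : Γ, Fact S s f) (a : Γ) :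
    ∃ b : Γ, a ≤ b ∧ ∃ F : Set (Cp X), F ⊆ K ∧ (∀ f ∈ F, Fact S b f) ∧
      ∀ f ∈ K, ∀ ε > (0:ℝ), ∀ m : ℕ, ∀ w : ℕ → X,
        ∃ h ∈ F, ∀ k ≤ m, ∀ hk : w k ∈ S.D a, |h.1 (w k) - f.1 (w k)| < ε := by
  obtain ⟨F, hFc, hFK, hFd⟩ := separable S K a
  rcases F.eq_empty_or_nonempty with hFe | hFne
  · exact ⟨a, le_rfl, F, hFK, by simp [hFe], hFd⟩
  · obtain ⟨e', hFr⟩ := hFc.exists_eq_range hFne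
    have hsel : ∀ n : ℕ, ∃ t : Γ, Fact S t (e' n) :=
      fun n => hK' (e' n) (hFK (hFr ▸ ⟨n, rfl⟩ : e' n ∈ F))
    choose ts hts using hsel
    obtain ⟨b₀, hb₀⟩ := countable_ub S ts
    obtain ⟨b, hab, hb₀b⟩ := S.directed a b₀
    refine ⟨b, hab, F, hFK, ?_, hFd⟩
    intro f hf
    rw [hFr] at hf
    obtain ⟨n, rfl⟩ := hf
    exact fact_mono S (le_trans (hb₀ n) hb₀b) (hts n)

lemma good_above (K : Set (Cp X)) (hcc : IsCountablyCompactSet K)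
    (hK' : ∀ f ∈ K, ∃ s : Γ, Fact S s f) (s₀ : Γ) :
    ∃ s, s₀ ≤ s ∧ Good S K s := by
  classical
  have hstep := step_lemma S K hK'
  choose nxt hnxt1 FF hFF1 hFF2 hFF3 using hstep
  set sq : ℕ → Γ := fun n => nxt^[n] s₀ with hsq
  have hsucc : ∀ n, sq (n+1) = nxt (sq n) := fun n => Function.iterate_succ_apply' nxt n s₀
  have hmono : Monotone sq := monotone_nat_of_le_succ fun n => by
    rw [hsucc]; exact hnxt1 _
  obtain ⟨t, ht⟩ := S.sigma sq hmono
  have hDt : S.D t = ⋃ n, S.D (sq n) := S.Dmono.2 sq t hmono ht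
  refine ⟨t, ht.1 ⟨0, rfl⟩, ?_⟩
  intro f hf
  by_cases hX : IsEmpty X
  · exact ⟨f, hf, fun x y _ => (hX.false x).elim, fun d hd => rfl⟩
  · haveI : Nonempty X := not_isEmpty_iff.1 hX
    obtain ⟨e, hD⟩ : ∃ e : ℕ → X, S.D t ⊆ Set.range e := by
      rcases (S.D t).eq_empty_or_nonempty with h | h
      · exact ⟨fun _ => Classical.arbitrary X, by rw [h]; exact empty_subset _⟩
      · obtain ⟨e, he⟩ := (S.D_ctble t).exists_eq_range h
        exact ⟨e, he ▸ subset_rfl⟩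
    have hsel : ∀ n : ℕ, ∃ h ∈ FF (sq n), ∀ k ≤ n, ∀ hk : e k ∈ S.D (sq n),
        |h.1 (e k) - f.1 (e k)| < 1/(n+1) :=
      fun n => hFF3 (sq n) f hf (1/(n+1)) (by positivity) n e
    choose hh hhF hhA using hsel
    have hhK : ∀ n, hh n ∈ K := fun n => hFF1 (sq n) (hhF n)
    have hhFact : ∀ n, Fact S t (hh n) := fun n => by
      have h1 : Fact S (nxt (sq n)) (hh n) := hFF2 (sq n) _ (hhF n)
      rw [← hsucc] at h1
      exact fact_mono S (ht.1 ⟨n+1, rfl⟩) h1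
    obtain ⟨h, hhK', hclus⟩ := exists_cluster hcc hh hhK
    refine ⟨h, hhK', hclus.mem_closed (isClosed_fact S t) 0 (fun n _ => hhFact n), ?_⟩
    intro d hd
    obtain ⟨m₀, hm₀⟩ : ∃ m₀, d ∈ S.D (sq m₀) := mem_iUnion.1 (hDt ▸ hd)
    obtain ⟨k, hk⟩ := hD hd
    subst hk
    refine hclus.eval_eq_of_approx (e k) (f.1 (e k)) ?_
    intro ε hε
    obtain ⟨N, hN⟩ := exists_nat_one_div_lt (K := ℝ) hε
    refine ⟨max N (max k m₀), fun n hn => ?_⟩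
    have h1 : k ≤ n := le_trans (le_trans (le_max_left _ _) (le_max_right N _)) hn
    have h2 : e k ∈ S.D (sq n) :=
      S.Dmono.1 _ _ (hmono (le_trans (le_trans (le_max_right _ _) (le_max_right N _)) hn)) hm₀
    have h3 := hhA n k h1 h2
    have h4 : 1/((n:ℝ)+1) ≤ 1/((N:ℝ)+1) := by
      apply one_div_le_one_div_of_le (by positivity)
      have h5 : (N:ℝ) ≤ n := Nat.cast_le.2 (le_trans (le_max_left _ _) hn)
      linarith
    have h6 : (1:ℝ)/(n+1) = 1/((n:ℝ)+1) := by norm_num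
    rw [h6] at h3
    linarith

lemma good_lub (K : Set (Cp X)) (hcc : IsCountablyCompactSet K) {c : ℕ → Γ}
    (hm : Monotone c) (hg : ∀ n, Good S K (c n)) {t : Γ}
    (ht : IsLUB (Set.range c) t) : Good S K t := by
  intro f hf
  have hsel : ∀ n, ∃ h, h ∈ K ∧ Fact S (c n) h ∧ ∀ d ∈ S.D (c n), h.1 d = f.1 d :=
    fun n => hg n f hf
  choose hh hhK hhF hhA using hsel
  obtain ⟨h, hK', hclus⟩ := exists_cluster hcc hh hhK
  refine ⟨h, hK', hclus.mem_closed (isClosed_fact S t) 0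
    (fun n _ => fact_mono S (ht.1 ⟨n, rfl⟩) (hhF n)), ?_⟩
  intro d hd
  rw [S.Dmono.2 c t hm ht] at hd
  obtain ⟨m, hdm⟩ := mem_iUnion.1 hd
  refine hclus.eval_eq_of_approx d (f.1 d) fun ε hε => ⟨m, fun n hn => ?_⟩
  rw [hhA n d (S.Dmono.1 _ _ (hm hn) hdm)]
  simpa using hε

lemma rr_cont {K : Set (Cp X)} (hcc : IsCountablyCompactSet K) {s : Γ}
    (hs : Good S K s) : Continuous (rr S K hs) := by
  haveI : Countable ↥(S.D s) := (S.D_ctble s).to_subtype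
  obtain ⟨B, hBc, hBne, hBb⟩ := TopologicalSpace.exists_countable_basis (↥(S.D s) → ℝ)
  rw [continuous_def]
  intro U' hU'
  obtain ⟨V, hV, hVeq⟩ := isOpen_induced_iff.1 hU'
  subst hVeq
  rw [isOpen_iff_forall_mem_open]
  intro x hx
  have hxV : (rr S K hs x).1 ∈ V := hx
  obtain ⟨b, hbB, hfb, hsub⟩ := net S hcc s hBb (rr S K hs x).1 (rr S K hs x).2
    (rr_fact S K hs x) V hV hxV
  refine ⟨{y : ↥K | pim S s y.1 ∈ b}, ?_, ?_, ?_⟩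
  · intro y hy
    show (rr S K hs y).1 ∈ V
    refine hsub ⟨⟨(rr S K hs y).2, rr_fact S K hs y⟩, ?_⟩
    have hpe : pim S s (rr S K hs y).1 = pim S s y.1 :=
      funext fun d => rr_eq_on S K hs y d.1 d.2
    rw [hpe]; exact hy
  · exact (hBb.isOpen hbB).preimage ((cont_pim S s).comp continuous_subtype_val)
  · show pim S s x.1 ∈ b
    have hpe : pim S s (rr S K hs x).1 = pim S s x.1 :=
      funext fun d => rr_eq_on S K hs x d.1 d.2
    rw [← hpe]; exact hfb

lemma rr_chain {K : Set (Cp X)} (hcc : IsCountablyCompactSet K) {c : ℕ → Γ}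
    (hm : Monotone c) (hg : ∀ n, Good S K (c n)) {t : Γ}
    (htl : IsLUB (Set.range c) t) (htg : Good S K t) (x : ↥K) :
    Tendsto (fun n => rr S K (hg n) x) atTop (𝓝 (rr S K htg x)) := by
  haveI : Countable ↥(S.D t) := (S.D_ctble t).to_subtype
  obtain ⟨B, hBc, hBne, hBb⟩ := TopologicalSpace.exists_countable_basis (↥(S.D t) → ℝ)
  have hDt : S.D t = ⋃ n, S.D (c n) := S.Dmono.2 c t hm htl
  have htd : Tendsto (fun n => pim S t (rr S K (hg n) x).1) atTop
      (𝓝 (pim S t (rr S K htg x).1)) := by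
    rw [tendsto_pi_nhds]
    intro d
    obtain ⟨m, hdm⟩ : ∃ m, d.1 ∈ S.D (c m) := mem_iUnion.1 (hDt ▸ d.2)
    refine tendsto_const_nhds.congr' ?_
    refine (eventually_ge_atTop m).mono fun n hn => ?_
    show pim S t (rr S K htg x).1 d = pim S t (rr S K (hg n) x).1 d
    have h1 : (rr S K (hg n) x).1.1 d.1 = x.1.1 d.1 :=
      rr_eq_on S K (hg n) x d.1 (S.Dmono.1 _ _ (hm hn) hdm)
    have h2 : (rr S K htg x).1.1 d.1 = x.1.1 d.1 := rr_eq_on S K htg x d.1 d.2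
    show (rr S K htg x).1.1 d.1 = (rr S K (hg n) x).1.1 d.1
    rw [h1, h2]
  rw [tendsto_nhds]
  intro U hU hxU
  obtain ⟨V, hV, hVeq⟩ := isOpen_induced_iff.1 hU
  subst hVeq
  obtain ⟨b, hbB, hfb, hsub⟩ := net S hcc t hBb (rr S K htg x).1 (rr S K htg x).2
    (rr_fact S K htg x) V hV hxU
  have hev : ∀ᶠ n in atTop, pim S t (rr S K (hg n) x).1 ∈ b :=
    htd ((hBb.isOpen hbB).mem_nhds hfb)
  filter_upwards [hev] with n hn
  exact hsub ⟨⟨(rr S K (hg n) x).2, fact_mono S (htl.1 ⟨n, rfl⟩) (rr_fact S K (hg n) x)⟩, hn⟩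

end QSkelAux

theorem hasFullRSkeleton_of_qSkeleton {X : Type u} [TopologicalSpace X] [T35Space X]
    {Γ : Type u} [PartialOrder Γ] (S : QSkeleton X Γ) (K : Set (Cp X))
    (hK : ∀ f ∈ K, ∃ (s : Γ) (g : S.Xs s → ℝ),
      @Continuous _ _ (S.top s) _ g ∧ (f : Cp X).1 = g ∘ S.q s)
    (hcc : IsCountablyCompactSet K) :
    HasFullRSkeleton ↥K := by
  classical
  open QSkelAux in
  have hK' : ∀ f ∈ K, ∃ s : Γ, QSkelAux.Fact S s f := by
    intro f hf
    obtain ⟨s, g, hgc, hfg⟩ := hK f hf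
    exact ⟨s, QSkelAux.fact_of_factor S hfg⟩
  refine ⟨{s : Γ // QSkelAux.Good S K s}, inferInstance,
    fun s => QSkelAux.rr S K s.2, ⟨?_, ?_, ?_, ?_, ?_, ?_, ?_, ?_, ?_⟩, ?_⟩
  -- directed
  · intro s t
    obtain ⟨u₀, hsu, htu⟩ := S.directed s.1 t.1
    obtain ⟨u, hu₀u, hug⟩ := QSkelAux.good_above S K hcc hK' u₀
    exact ⟨⟨u, hug⟩, Subtype.coe_le_coe.1 (le_trans hsu hu₀u),
      Subtype.coe_le_coe.1 (le_trans htu hu₀u)⟩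
  -- sigma
  · intro c hm
    have hm' : Monotone fun n => (c n).1 := fun a b hab => hm hab
    obtain ⟨t, ht⟩ := S.sigma (fun n => (c n).1) hm'
    have htg : QSkelAux.Good S K t := QSkelAux.good_lub S K hcc hm' (fun n => (c n).2) ht
    refine ⟨⟨t, htg⟩, ?_, ?_⟩
    · rintro y ⟨n, rfl⟩
      exact (ht.1 ⟨n, rfl⟩ : (c n).1 ≤ t)
    · intro u hu
      refine (ht.2 ?_ : t ≤ u.1)
      rintro y ⟨n, rfl⟩
      exact (hu ⟨n, rfl⟩ : (c n).1 ≤ u.1)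
  -- cont
  · intro s
    exact QSkelAux.rr_cont S hcc s.2
  -- retract
  · intro s x
    have := QSkelAux.rr_fixed S K s.2 (QSkelAux.rr S K s.2 x) (QSkelAux.rr_fact S K s.2 x)
    exact this
  -- cosmic
  · intro s
    haveI : Countable ↥(S.D s.1) := (S.D_ctble s.1).to_subtype
    obtain ⟨B, hBc, hBne, hBb⟩ := TopologicalSpace.exists_countable_basis (↥(S.D s.1) → ℝ)
    refine ⟨(fun b => {y : ↥K | QSkelAux.Fact S s.1 y.1 ∧ QSkelAux.pim S s.1 y.1 ∈ b}) '' B,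
      hBc.image _, ?_, ?_⟩
    · rintro M ⟨b, hbB, rfl⟩
      intro y hy
      exact (QSkelAux.rr_range S K s.2 y).2 hy.1
    · intro x hx U hU hxU
      have hxF : QSkelAux.Fact S s.1 x.1 := (QSkelAux.rr_range S K s.2 x).1 hx
      obtain ⟨V, hV, hVeq⟩ := isOpen_induced_iff.1 hU
      subst hVeq
      obtain ⟨b, hbB, hfb, hsub⟩ := QSkelAux.net S hcc s.1 hBb x.1 x.2 hxF V hV hxU
      refine ⟨_, ⟨b, hbB, rfl⟩, ⟨hxF, hfb⟩, ?_⟩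
      intro y hy
      exact hsub ⟨⟨y.2, hy.1⟩, hy.2⟩
  -- comm₁
  · intro s t hst x
    refine Subtype.ext (QSkelAux.fact_unique S (QSkelAux.rr_fact S K s.2 _)
      (QSkelAux.rr_fact S K s.2 x) ?_)
    intro d hd
    rw [QSkelAux.rr_eq_on S K s.2 _ d hd, QSkelAux.rr_eq_on S K s.2 x d hd,
      QSkelAux.rr_eq_on S K t.2 x d (S.Dmono.1 _ _ hst hd)]
  -- comm₂
  · intro s t hst x
    have h1 := QSkelAux.rr_fixed S K t.2 (QSkelAux.rr S K s.2 x)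
      (QSkelAux.fact_mono S hst (QSkelAux.rr_fact S K s.2 x))
    exact h1
  -- chain
  · intro c T hm hT
    have hm' : Monotone fun n => (c n).1 := fun a b hab => hm hab
    obtain ⟨t', ht'⟩ := S.sigma (fun n => (c n).1) hm'
    have htg' : QSkelAux.Good S K t' := QSkelAux.good_lub S K hcc hm' (fun n => (c n).2) ht'
    have hTt : T = ⟨t', htg'⟩ := by
      apply le_antisymm
      · refine hT.2 ?_
        rintro y ⟨n, rfl⟩
        exact (ht'.1 ⟨n, rfl⟩ : (c n).1 ≤ t')
      · refine (ht'.2 ?_ : t' ≤ T.1)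
        rintro y ⟨n, rfl⟩
        exact (hT.1 ⟨n, rfl⟩ : (c n).1 ≤ T.1)
    subst hTt
    intro x
    exact QSkelAux.rr_chain S hcc hm' (fun n => (c n).2) ht' htg' x
  -- toId
  · intro x
    obtain ⟨t₀, ht₀⟩ := hK' x.1 x.2
    obtain ⟨t, htt, htg⟩ := QSkelAux.good_above S K hcc hK' t₀
    have hfix : ∀ s : {s : Γ // QSkelAux.Good S K s}, (⟨t, htg⟩ : {s : Γ // _}) ≤ s →
        QSkelAux.rr S K s.2 x = x := fun s hs =>
      QSkelAux.rr_fixed S K s.2 x (QSkelAux.fact_mono S (le_trans htt hs) ht₀)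
    exact tendsto_const_nhds.congr'
      ((eventually_ge_atTop (⟨t, htg⟩ : {s : Γ // QSkelAux.Good S K s})).mono
        fun s hs => (hfix s hs).symm)
  -- full
  · intro x
    obtain ⟨t₀, ht₀⟩ := hK' x.1 x.2
    obtain ⟨t, htt, htg⟩ := QSkelAux.good_above S K hcc hK' t₀
    exact ⟨⟨t, htg⟩, (QSkelAux.rr_range S K htg x).2 (QSkelAux.fact_mono S htt ht₀)⟩
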